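/- (Murakami's stability test) Let f : ℝ → ℝ, let x̄ be a fixed point of f (f(x̄) = x̄), and let k ≥ 3 be an odd integer. Suppose f is (2k−1)-times continuously differentiable, f′(x̄) = −1, the j-th derivative of f at x̄ vanishes for every j with 2 ≤ j ≤ k−1, and the k-th derivative of f at x̄ is strictly positive. Then x̄ is asymptotically stable: there exists δ > 0 such that for every x₀ with |x₀ − x̄| < δ, the sequence of iterates f^[n](x₀) converges to x̄ as n → ∞. -/

import Mathlib

open Filter Set Nat

private lemma myIDW {f : ℝ → ℝ} {N m : ℕ} (hf : ContDiff ℝ (N : ℕ) f) (hm : m ≤ N)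
    {s : Set ℝ} (hs : UniqueDiffOn ℝ s) {x : ℝ} (hx : x ∈ s) :
    iteratedDerivWithin m f s x = iteratedDeriv m f x := by
  have h1 : ContDiff ℝ ((m : ℕ∞)) f := by
    apply hf.of_le
    exact_mod_cast hm
  have h2 := (contDiff_iff_ftaylorSeries.mp h1).hasFTaylorSeriesUpToOn s
  have h3 := h2.eq_iteratedFDerivWithin_of_uniqueDiffOn (m := m) (by exact_mod_cast le_rfl) hs hx
  rw [iteratedDerivWithin_eq_iteratedFDerivWithin, iteratedDeriv_eq_iteratedFDeriv, ← h3]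
  rfl

/-- One-sided Taylor step: for `u > 0`, `f (xbar + u) - xbar = -u + (f⁽ᵏ⁾(ξ)/k!) u^k`. -/
private lemma taylor_one {f : ℝ → ℝ} {xbar : ℝ} {k : ℕ} (hk3 : 3 ≤ k)
    (hf : ContDiff ℝ (2 * k - 1 : ℕ) f)
    (hfix : f xbar = xbar) (hd1 : deriv f xbar = -1)
    (hdj : ∀ j : ℕ, 2 ≤ j → j ≤ k - 1 → iteratedDeriv j f xbar = 0)
    {u : ℝ} (hu : 0 < u) :
    ∃ ξ ∈ Set.Ioo xbar (xbar + u),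
      f (xbar + u) - xbar = -u + (iteratedDeriv k f ξ / k !) * u ^ k := by
  have hxlt : xbar < xbar + u := by linarith
  have hud : UniqueDiffOn ℝ (Icc xbar (xbar + u)) := uniqueDiffOn_Icc hxlt
  have hfC : ContDiffOn ℝ (k - 1 : ℕ) f (Icc xbar (xbar + u)) := by
    apply ContDiff.contDiffOn
    apply hf.of_le
    exact_mod_cast (by omega : k - 1 ≤ 2 * k - 1)
  have hdiff : Differentiable ℝ (iteratedDeriv (k - 1) f) := by
    apply hf.differentiable_iteratedDeriv
    exact_mod_cast (by omega : k - 1 < 2 * k - 1)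
  have hf' : DifferentiableOn ℝ (iteratedDerivWithin (k - 1) f (Icc xbar (xbar + u)))
      (Ioo xbar (xbar + u)) := by
    apply (hdiff.differentiableOn).congr
    intro y hy
    exact myIDW hf (by omega) hud (Ioo_subset_Icc_self hy)
  obtain ⟨ξ, hξ, H⟩ := taylor_mean_remainder_lagrange (n := k - 1) hxlt.ne
    (by rwa [Set.uIcc_of_le hxlt.le]) (by rwa [Set.uIcc_of_le hxlt.le, Set.uIoo_of_le hxlt.le])
  rw [Set.uIoo_of_le hxlt.le] at hξ
  rw [Set.uIcc_of_le hxlt.le] at H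
  refine ⟨ξ, hξ, ?_⟩
  have hk1 : k - 1 + 1 = k := by omega
  rw [hk1] at H
  have hIDk : iteratedDerivWithin k f (Icc xbar (xbar + u)) ξ = iteratedDeriv k f ξ :=
    myIDW hf (by omega) hud (Ioo_subset_Icc_self hξ)
  have hT : taylorWithinEval f (k - 1) (Icc xbar (xbar + u)) xbar (xbar + u) = xbar - u := by
    rw [taylor_within_apply]
    have hmem : xbar ∈ Icc xbar (xbar + u) := left_mem_Icc.mpr hxlt.le
    have hconv : ∀ j ∈ Finset.range (k - 1 + 1),
        ((j ! : ℝ)⁻¹ * (xbar + u - xbar) ^ j) • iteratedDerivWithin j f (Icc xbar (xbar + u)) xbar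
          = ((j ! : ℝ)⁻¹ * u ^ j) • iteratedDeriv j f xbar := by
      intro j hj
      simp only [Finset.mem_range] at hj
      rw [myIDW hf (by omega) hud hmem]
      congr 2
      ring_nf
    rw [Finset.sum_congr rfl hconv, hk1]
    rw [Finset.range_eq_Ico, ← Finset.sum_Ico_consecutive _ (by omega : 0 ≤ 2) (by omega : 2 ≤ k)]
    have h2 : ∑ j ∈ Finset.Ico 2 k, ((j ! : ℝ)⁻¹ * u ^ j) • iteratedDeriv j f xbar = 0 := by
      apply Finset.sum_eq_zero
      intro j hj
      simp only [Finset.mem_Ico] at hj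
      rw [hdj j hj.1 (by omega)]
      simp
    rw [h2, add_zero]
    have he : Finset.Ico 0 2 = ({0, 1} : Finset ℕ) := by decide
    rw [he, Finset.sum_insert (by decide), Finset.sum_singleton]
    simp only [pow_zero, Nat.factorial_zero, Nat.cast_one, inv_one, mul_one, one_mul,
      iteratedDeriv_zero, pow_one, Nat.factorial_one, iteratedDeriv_one, hfix, hd1,
      smul_eq_mul]
    ring
  rw [hT, hIDk] at H
  have hsimp : xbar + u - xbar = u := by ring
  rw [hsimp] at H
  have hkfac : (0:ℝ) < k ! := by positivity
  have : f (xbar + u) - (xbar - u) = iteratedDeriv k f ξ * u ^ k / k ! := H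
  field_simp at this ⊢
  linarith [this]

/-- iterated derivatives of the conjugated map. -/
private lemma iteratedDeriv_conj (f : ℝ → ℝ) (b : ℝ) {n : ℕ} (hn : 0 < n) (y : ℝ) :
    iteratedDeriv n (fun z => 2 * b - f (2 * b - z)) y
      = -((-1 : ℝ) ^ n * iteratedDeriv n f (2 * b - y)) := by
  have e0 : (fun z : ℝ => 2 * b - f (2 * b - z)) = (fun z => 2 * b + -(f (2 * b - z))) := by
    funext z; ring
  have e1 : iteratedDeriv n (fun z : ℝ => 2 * b - f (2 * b - z)) y
      = iteratedDeriv n (fun z => -(f (2 * b - z))) y := by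
    rw [e0, ← iteratedDerivWithin_univ, ← iteratedDerivWithin_univ,
      iteratedDerivWithin_const_add hn]
  have e2 : iteratedDeriv n (fun z : ℝ => -(f (2 * b - z))) y
      = -(iteratedDeriv n (fun z => f (2 * b - z)) y) := iteratedDeriv_neg n _ y
  have e3 : (fun z : ℝ => f (2 * b - z)) = (fun z : ℝ => (fun w => f (2 * b + w)) (-z)) := by
    funext z; rw [sub_eq_add_neg]
  have e4 := iteratedDeriv_comp_neg (𝕜 := ℝ) n (fun w : ℝ => f (2 * b + w)) y
  have e5 := iteratedDeriv_comp_const_add (𝕜 := ℝ) n f (2 * b)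
  rw [e1, e2, e3, e4, e5, smul_eq_mul]
  simp only [sub_eq_add_neg]

/-- Two-sided Taylor representation. -/
private lemma taylor_both {f : ℝ → ℝ} {xbar : ℝ} {k : ℕ} (hk3 : 3 ≤ k) (hkodd : Odd k)
    (hf : ContDiff ℝ (2 * k - 1 : ℕ) f)
    (hfix : f xbar = xbar) (hd1 : deriv f xbar = -1)
    (hdj : ∀ j : ℕ, 2 ≤ j → j ≤ k - 1 → iteratedDeriv j f xbar = 0)
    {x : ℝ} (hx : x ≠ xbar) :
    ∃ ξ : ℝ, |ξ - xbar| < |x - xbar| ∧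
      f x - xbar = -(x - xbar) + (iteratedDeriv k f ξ / k !) * (x - xbar) ^ k := by
  rcases hx.lt_or_gt with hlt | hlt
  · -- x < xbar : use the conjugated map F
    set F : ℝ → ℝ := fun z => 2 * xbar - f (2 * xbar - z) with hF
    have hfF : ContDiff ℝ (2 * k - 1 : ℕ) F :=
      contDiff_const.sub (hf.comp (contDiff_const.sub contDiff_id))
    have hfixF : F xbar = xbar := by
      simp only [hF]
      rw [show 2 * xbar - xbar = xbar by ring, hfix]; ring
    have hd1F : deriv F xbar = -1 := by
      rw [← iteratedDeriv_one, hF, iteratedDeriv_conj f xbar one_pos,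
        show 2 * xbar - xbar = xbar by ring, iteratedDeriv_one, hd1]
      norm_num
    have hdjF : ∀ j : ℕ, 2 ≤ j → j ≤ k - 1 → iteratedDeriv j F xbar = 0 := by
      intro j hj1 hj2
      rw [hF, iteratedDeriv_conj f xbar (by omega : 0 < j),
        show 2 * xbar - xbar = xbar by ring, hdj j hj1 hj2]
      ring
    have hu : 0 < xbar - x := by linarith
    obtain ⟨ξ', hξ', H⟩ := taylor_one hk3 hfF hfixF hd1F hdjF hu
    refine ⟨2 * xbar - ξ', ?_, ?_⟩
    · have h1 : xbar < ξ' := hξ'.1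
      have h2 : ξ' < xbar + (xbar - x) := hξ'.2
      rw [abs_of_neg (by linarith : 2 * xbar - ξ' - xbar < 0),
        abs_of_neg (by linarith : x - xbar < 0)]
      linarith
    · have hFval : F (xbar + (xbar - x)) = 2 * xbar - f x := by
        simp only [hF]
        rw [show 2 * xbar - (xbar + (xbar - x)) = x by ring]
      have hDk : iteratedDeriv k F ξ' = iteratedDeriv k f (2 * xbar - ξ') := by
        rw [hF, iteratedDeriv_conj f xbar (by omega : 0 < k), hkodd.neg_one_pow]
        ring
      rw [hFval, hDk] at H
      have hpow : (x - xbar) ^ k = -((xbar - x) ^ k) := by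
        rw [show x - xbar = -(xbar - x) by ring, hkodd.neg_pow]
      rw [hpow]
      have hH : 2 * xbar - f x - xbar = -(xbar - x) +
          iteratedDeriv k f (2 * xbar - ξ') / ↑k ! * (xbar - x) ^ k := H
      linarith [hH]
  · -- xbar < x
    have hu : 0 < x - xbar := by linarith
    obtain ⟨ξ, hξ, H⟩ := taylor_one hk3 hf hfix hd1 hdj hu
    rw [show xbar + (x - xbar) = x by ring] at hξ H
    refine ⟨ξ, ?_, H⟩
    rw [abs_of_pos (by linarith [hξ.1] : (0:ℝ) < ξ - xbar), abs_of_pos hu]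
    linarith [hξ.2]

/-- Murakami's test for asymptotic stability of a fixed point of
`x_{n+1} = f(x_n)` with `f'(x̄) = -1`. -/
theorem murakami_stability (f : ℝ → ℝ) (xbar : ℝ) (k : ℕ)
    (hk3 : 3 ≤ k) (hkodd : Odd k)
    (hf : ContDiff ℝ (2 * k - 1 : ℕ) f)
    (hfix : f xbar = xbar)
    (hd1 : deriv f xbar = -1)
    (hdj : ∀ j : ℕ, 2 ≤ j → j ≤ k - 1 → iteratedDeriv j f xbar = 0)
    (hdk : 0 < iteratedDeriv k f xbar) :
    ∃ δ > 0, ∀ x0 : ℝ, |x0 - xbar| < δ →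
      Tendsto (fun n : ℕ => f^[n] x0) atTop (nhds xbar) := by
  have hkfac : (0:ℝ) < k ! := by positivity
  set a : ℝ := iteratedDeriv k f xbar / k ! with ha_def
  have ha : 0 < a := div_pos hdk hkfac
  have hcont : Continuous (iteratedDeriv k f) :=
    hf.continuous_iteratedDeriv k (by exact_mod_cast (by omega : k ≤ 2 * k - 1))
  obtain ⟨δ₁, hδ₁pos, hδ₁⟩ := Metric.continuousAt_iff.mp hcont.continuousAt
    (iteratedDeriv k f xbar / 2) (by linarith)
  have hratio : ∀ y : ℝ, |y - xbar| < δ₁ →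
      a / 2 ≤ iteratedDeriv k f y / k ! ∧ iteratedDeriv k f y / k ! ≤ 3 * a / 2 := by
    intro y hy
    have h1 := hδ₁ (show dist y xbar < δ₁ by rwa [Real.dist_eq])
    rw [Real.dist_eq] at h1
    obtain ⟨hl, hr⟩ := abs_lt.mp h1
    constructor
    · calc a / 2 = (iteratedDeriv k f xbar / 2) / k ! := by rw [ha_def]; ring
        _ ≤ iteratedDeriv k f y / k ! := by gcongr <;> linarith
    · calc iteratedDeriv k f y / k ! ≤ (3 * iteratedDeriv k f xbar / 2) / k ! := by
            gcongr <;> linarith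
        _ = 3 * a / 2 := by rw [ha_def]; ring
  set δ : ℝ := min (δ₁ / 2) (min 1 (2 / (3 * a))) with hδ_def
  have hδpos : 0 < δ := by
    apply lt_min (by linarith)
    exact lt_min one_pos (by positivity)
  have hδle1 : δ ≤ 1 := le_trans (min_le_right _ _) (min_le_left _ _)
  have hδlea : δ ≤ 2 / (3 * a) := le_trans (min_le_right _ _) (min_le_right _ _)
  have hδleδ₁ : δ ≤ δ₁ / 2 := min_le_left _ _
  -- the key contraction estimate
  have key : ∀ x : ℝ, |x - xbar| ≤ δ →
      |f x - xbar| ≤ |x - xbar| - a / 2 * |x - xbar| ^ k := by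
    intro x hxle
    rcases eq_or_ne x xbar with rfl | hne
    · simp [hfix, zero_pow (by omega : k ≠ 0)]
    · obtain ⟨ξ, hξlt, hrep⟩ := taylor_both hk3 hkodd hf hfix hd1 hdj hne
      set u : ℝ := x - xbar with hu_def
      set c : ℝ := iteratedDeriv k f ξ / k ! with hc_def
      have hξδ : |ξ - xbar| < δ₁ := by
        have := hξlt.trans_le hxle
        linarith [hδleδ₁]
      obtain ⟨hc1, hc2⟩ := hratio ξ hξδ
      have hu0 : (0:ℝ) < |u| := abs_pos.mpr (sub_ne_zero.mpr hne)
      have hkeven : Even (k - 1) := by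
        obtain ⟨m, hm⟩ := hkodd
        exact ⟨m, by omega⟩
      have hpowabs : |u| ^ (k - 1) = u ^ (k - 1) := hkeven.pow_abs u
      have hupow : u ^ k = |u| ^ (k - 1) * u := by
        conv_lhs => rw [show k = (k - 1) + 1 by omega, pow_succ]
        rw [hpowabs]
      have hrep' : f x - xbar = -(u * (1 - c * |u| ^ (k - 1))) := by
        rw [hrep, hupow]
        ring
      set t : ℝ := c * |u| ^ (k - 1) with ht_def
      have hc1' : 0 ≤ c := le_trans (by linarith) hc1
      have ht0 : 0 ≤ t := mul_nonneg hc1' (by positivity)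
      have hpowδ : |u| ^ (k - 1) ≤ δ := by
        calc |u| ^ (k - 1) ≤ δ ^ (k - 1) := pow_le_pow_left₀ (abs_nonneg _) hxle _
          _ ≤ δ := pow_le_of_le_one hδpos.le hδle1 (by omega)
      have ht1 : t ≤ 1 := by
        have h1 : t ≤ 3 * a / 2 * δ :=
          mul_le_mul hc2 hpowδ (by positivity) (by positivity)
        have h2 : 3 * a / 2 * δ ≤ 3 * a / 2 * (2 / (3 * a)) :=
          mul_le_mul_of_nonneg_left hδlea (by positivity)
        have h3 : 3 * a / 2 * (2 / (3 * a)) = 1 := by field_simp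
        linarith
      have habs : |f x - xbar| = |u| * (1 - t) := by
        rw [hrep', abs_neg, abs_mul, abs_of_nonneg (by linarith : (0:ℝ) ≤ 1 - t)]
      rw [habs]
      have htlow : a / 2 * |u| ^ (k - 1) ≤ t := mul_le_mul_of_nonneg_right hc1 (by positivity)
      have hfin : |u| ^ k = |u| ^ (k - 1) * |u| := by
        conv_lhs => rw [show k = (k - 1) + 1 by omega, pow_succ]
      nlinarith [hu0, htlow, hfin]
  refine ⟨δ, hδpos, ?_⟩
  intro x0 hx0
  set r : ℕ → ℝ := fun n => |f^[n] x0 - xbar| with hr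
  have hrnn : ∀ n, 0 ≤ r n := fun n => abs_nonneg _
  have hrδ : ∀ n, r n ≤ δ := by
    intro n
    induction n with
    | zero => simpa [hr] using hx0.le
    | succ n ih =>
      have hk := key _ ih
      have hnn : 0 ≤ a / 2 * (r n) ^ k := by positivity
      have : r (n + 1) = |f (f^[n] x0) - xbar| := by
        rw [hr]; simp [Function.iterate_succ_apply']
      rw [this]
      calc |f (f^[n] x0) - xbar| ≤ r n - a / 2 * (r n) ^ k := hk
        _ ≤ δ := by linarith [ih]
  have hstep : ∀ n, r (n + 1) ≤ r n - a / 2 * (r n) ^ k := by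
    intro n
    have hk := key _ (hrδ n)
    have : r (n + 1) = |f (f^[n] x0) - xbar| := by
      rw [hr]; simp [Function.iterate_succ_apply']
    rw [this]
    exact hk
  have hanti : Antitone r := antitone_nat_of_succ_le fun n => by
    have := hstep n
    have hnn : 0 ≤ a / 2 * (r n) ^ k := by positivity
    linarith
  have hbdd : BddBelow (Set.range r) := ⟨0, by rintro y ⟨n, rfl⟩; exact hrnn n⟩
  have hL : Tendsto r atTop (nhds (⨅ n, r n)) := tendsto_atTop_ciInf hanti hbdd
  set L : ℝ := ⨅ n, r n with hL_def
  have hL0 : 0 ≤ L := le_ciInf hrnn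
  have h2 : Tendsto (fun n => r (n + 1)) atTop (nhds L) :=
    hL.comp (tendsto_add_atTop_nat 1)
  have h3 : Tendsto (fun n => r n - a / 2 * (r n) ^ k) atTop
      (nhds (L - a / 2 * L ^ k)) := by
    exact hL.sub (((hL.pow k)).const_mul _)
  have hle : L ≤ L - a / 2 * L ^ k := le_of_tendsto_of_tendsto' h2 h3 hstep
  have hLk0 : L ^ k ≤ 0 := by nlinarith
  have hLz : L = 0 := by
    have hLknn : 0 ≤ L ^ k := pow_nonneg hL0 k
    have : L ^ k = 0 := le_antisymm hLk0 hLknn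
    exact pow_eq_zero_iff (by omega : k ≠ 0) |>.mp this
  rw [tendsto_iff_dist_tendsto_zero]
  have : Tendsto r atTop (nhds 0) := hLz ▸ hL
  simpa [Real.dist_eq, hr] using this
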